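/- For γ, λ ∈ (0,1) and a label y satisfying the probabilistic assignment y = 1 with probability proportional to (1-γ)p₁ and y = γw/(γw+1) with probability proportional to (1+γw)p₀ (where p₁, p₀ > 0), the conditional expectation is E[y] = ((1-γ)p₁/p₀ + γw) / ((1-γ)p₁/p₀ + γw + 1), and consequently E[y]/(1 - E[y]) = (1-γ)p₁/p₀ + γw. -/

import Mathlib

/-- with positives sampled with weight `(1-γ) p₁` (label `y = 1`) and
negatives with weight `(1+γw) p₀` (label `y = γw/(γw+1)`), the conditional expectation
of the label is `E[y] = ((1-γ)p₁/p₀ + γw) / ((1-γ)p₁/p₀ + γw + 1)`, and hence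
`E[y]/(1 - E[y]) = (1-γ)p₁/p₀ + γw`. -/
theorem expected_td_target (γ lam p₁ p₀ w : ℝ)
    (hγ : γ ∈ Set.Ioo (0:ℝ) 1) (hlam : lam ∈ Set.Ioo (0:ℝ) 1)
    (hp₁ : 0 < p₁) (hp₀ : 0 < p₀) (hw : 0 ≤ w) :
    (((1 - γ) * p₁ * 1 + (1 + γ * w) * p₀ * (γ * w / (γ * w + 1))) /
        ((1 - γ) * p₁ + (1 + γ * w) * p₀)
      = ((1 - γ) * p₁ / p₀ + γ * w) / ((1 - γ) * p₁ / p₀ + γ * w + 1)) ∧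
    ((((1 - γ) * p₁ * 1 + (1 + γ * w) * p₀ * (γ * w / (γ * w + 1))) /
        ((1 - γ) * p₁ + (1 + γ * w) * p₀)) /
      (1 - ((1 - γ) * p₁ * 1 + (1 + γ * w) * p₀ * (γ * w / (γ * w + 1))) /
        ((1 - γ) * p₁ + (1 + γ * w) * p₀))
      = (1 - γ) * p₁ / p₀ + γ * w) := by
  obtain ⟨hγ0, hγ1⟩ := hγ
  have hgw : (0:ℝ) < γ * w + 1 := by positivity
  have hN : (0:ℝ) < (1 - γ) * p₁ + p₀ * (γ * w) + p₀ := by nlinarith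
  have key : (1 + γ * w) * p₀ * (γ * w / (γ * w + 1)) = p₀ * (γ * w) := by
    field_simp; ring
  have hD : (1 - γ) * p₁ + (1 + γ * w) * p₀ = (1 - γ) * p₁ + p₀ * (γ * w) + p₀ := by ring
  rw [key, hD]
  have hNum : (1 - γ) * p₁ * 1 + p₀ * (γ * w) = (1 - γ) * p₁ + p₀ * (γ * w) := by ring
  rw [hNum]
  set N := (1 - γ) * p₁ + p₀ * (γ * w) with hNdef
  have hgw0 : 0 ≤ γ * w := mul_nonneg hγ0.le hw
  have hN0 : 0 ≤ N := by
    rw [hNdef]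
    nlinarith [mul_pos (sub_pos.mpr hγ1) hp₁, mul_nonneg hp₀.le hgw0]
  have hR : (0:ℝ) < (1 - γ) * p₁ / p₀ + γ * w + 1 := by
    have hA : 0 < (1 - γ) * p₁ / p₀ := div_pos (mul_pos (by linarith) hp₁) hp₀
    linarith
  constructor
  · rw [div_eq_div_iff (by linarith) (by linarith)]
    rw [hNdef]
    field_simp
  · have h1 : 1 - N / (N + p₀) = p₀ / (N + p₀) := by
      field_simp
      ring
    rw [h1, div_div_div_cancel_right₀ (by positivity : N + p₀ ≠ 0), hNdef]
    field_simp
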